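/- For y, z ∈ ℝ^n, the matrix Q = 2((‖y‖²‖z‖² − ⟨y,z⟩²)I_n + (yzᵀ − zyᵀ)²) is symmetric positive semidefinite. -/

import Mathlib

open Matrix

noncomputable def Qmat {n : ℕ} (y z : Fin n → ℝ) : Matrix (Fin n) (Fin n) ℝ :=
  (2 : ℝ) • ((((y ⬝ᵥ y) * (z ⬝ᵥ z) - (y ⬝ᵥ z) ^ 2) • (1 : Matrix (Fin n) (Fin n) ℝ))
    + (Matrix.vecMulVec y z - Matrix.vecMulVec z y) ^ 2)

lemma vecMulVec_mulVec' {n : ℕ} (a b x : Fin n → ℝ) :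
    Matrix.vecMulVec a b *ᵥ x = (b ⬝ᵥ x) • a := by
  ext i
  simp only [Matrix.mulVec, Matrix.vecMulVec_apply, dotProduct, Pi.smul_apply,
    smul_eq_mul, Finset.sum_mul]
  exact Finset.sum_congr rfl fun j _ => by ring

lemma dot_sq_le {n : ℕ} (u v : Fin n → ℝ) : (u ⬝ᵥ v) ^ 2 ≤ (u ⬝ᵥ u) * (v ⬝ᵥ v) := by
  simpa [dotProduct, pow_two] using
    Finset.sum_mul_sq_le_sq_mul_sq Finset.univ u v

theorem Qmat_posSemidef {n : ℕ} (y z : Fin n → ℝ) :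
    (Qmat y z).IsSymm ∧ (Qmat y z).PosSemidef := by
  set A : Matrix (Fin n) (Fin n) ℝ := Matrix.vecMulVec y z - Matrix.vecMulVec z y with hA
  have hAT : Aᵀ = -A := by
    ext i j
    simp [hA, Matrix.vecMulVec_apply, mul_comm]
  have hsymm : (Qmat y z).IsSymm := by
    unfold Qmat
    rw [Matrix.IsSymm]
    rw [Matrix.transpose_smul, Matrix.transpose_add, Matrix.transpose_smul,
      Matrix.transpose_one, ← hA, Matrix.transpose_pow, hAT]
    rw [neg_sq]
  have hherm : (Qmat y z).IsHermitian := by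
    rw [Matrix.IsHermitian, Matrix.conjTranspose_eq_transpose_of_trivial, hsymm]
  refine ⟨hsymm, Matrix.PosSemidef.of_dotProduct_mulVec_nonneg hherm fun x => ?_⟩
  set a := y ⬝ᵥ y
  set b := y ⬝ᵥ z
  set c := z ⬝ᵥ z
  set p := z ⬝ᵥ x
  set q := y ⬝ᵥ x
  set s := x ⬝ᵥ x
  have hAx : A *ᵥ x = p • y - q • z := by
    simp [hA, Matrix.sub_mulVec, vecMulVec_mulVec', p, q]
  have hA2x : A *ᵥ (A *ᵥ x) = (p * b - q * c) • y - (p * a - q * b) • z := by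
    rw [hAx]
    simp [hA, Matrix.sub_mulVec, vecMulVec_mulVec', Matrix.mulVec_smul,
      dotProduct_smul, smul_smul, dotProduct_sub, a, b, c, smul_sub,
      dotProduct_comm z y]
  have key : star x ⬝ᵥ (Qmat y z *ᵥ x) =
      2 * ((a * c - b ^ 2) * s - (a * p ^ 2 - 2 * b * p * q + c * q ^ 2)) := by
    have : Qmat y z *ᵥ x = (2 : ℝ) • ((a * c - b ^ 2) • x + A *ᵥ (A *ᵥ x)) := by
      unfold Qmat
      rw [← hA, pow_two A]
      simp [Matrix.add_mulVec, Matrix.smul_mulVec, Matrix.mulVec_mulVec, a, b, c]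
    rw [this, hA2x]
    simp only [star_trivial, dotProduct_smul, dotProduct_add,
      dotProduct_sub, smul_eq_mul]
    have h1 : x ⬝ᵥ y = q := dotProduct_comm x y
    have h2 : x ⬝ᵥ z = p := dotProduct_comm x z
    rw [h1, h2]
    ring
  rw [key]
  have E : 0 ≤ (a * c - b ^ 2) * s - (a * p ^ 2 - 2 * b * p * q + c * q ^ 2) := by
    rcases eq_or_lt_of_le (by simpa [a] using dotProduct_self_star_nonneg y) with h0 | h0
    · -- a = 0, hence y = 0
      have hy : y = 0 := by
        rw [← dotProduct_self_eq_zero (v := y)]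
        exact h0.symm
      simp [a, b, q, hy]
    · -- a > 0: Cauchy–Schwarz for u = a•x - q•y and v = a•z - b•y
      have hcs := dot_sq_le (a • x - q • y) (a • z - b • y)
      have huu : (a • x - q • y) ⬝ᵥ (a • x - q • y) = a * (a * s - q ^ 2) := by
        simp [dotProduct_sub, sub_dotProduct, dotProduct_smul,
          smul_dotProduct, dotProduct_comm x y, a, q, s]
        ring
      have hvv : (a • z - b • y) ⬝ᵥ (a • z - b • y) = a * (a * c - b ^ 2) := by
        simp [dotProduct_sub, sub_dotProduct, dotProduct_smul,
          smul_dotProduct, dotProduct_comm z y, a, b, c]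
        ring
      have huv : (a • x - q • y) ⬝ᵥ (a • z - b • y) = a * (a * p - b * q) := by
        simp [dotProduct_sub, sub_dotProduct, dotProduct_smul,
          smul_dotProduct, dotProduct_comm x y, dotProduct_comm x z,
          dotProduct_comm y z, a, b, p, q]
        ring
      rw [huu, hvv, huv] at hcs
      have ha2 : (0:ℝ) < a ^ 2 := by positivity
      have h' : a ^ 2 * ((a * p - b * q) ^ 2) ≤ a ^ 2 * ((a * s - q ^ 2) * (a * c - b ^ 2)) := by
        linear_combination hcs
      have h2 : (a * p - b * q) ^ 2 ≤ (a * s - q ^ 2) * (a * c - b ^ 2) :=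
        le_of_mul_le_mul_left h' ha2
      nlinarith [h2, h0]
  linarith
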